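/- Let q : ℤ^m → ℚ be a quasipolynomial, and fix integers a_1, …, a_m, c_0, …, c_m, and d ≠ 0. Then the function Q_2 : ℤ^{m+1} → ℚ defined by Q_2(t_0, t_1, …, t_m) = Σ_{k=0}^{⌊(c_0 t_0 + ⋯ + c_m t_m)/d⌋} q(t_1 + a_1 k, …, t_m + a_m k), where the sum is taken with the signed convention, is a quasipolynomial on ℤ^{m+1}. -/

import Mathlib

open Polynomial in
lemma exists_antideriv_pow (n : ℕ) :
    ∃ A : Polynomial ℚ, (∀ x : ℚ, A.eval x - A.eval (x-1) = x^n) ∧ A.eval (-1) = 0 := by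
  refine ⟨Polynomial.C ((n+1:ℚ)⁻¹) * ((Polynomial.bernoulli (n+1)).comp (Polynomial.X + 1)
    - Polynomial.C ((Polynomial.bernoulli (n+1)).eval 0)), ?_, ?_⟩
  · intro x
    have h1 := Polynomial.bernoulli_eval_one_add (n+1) x
    rw [add_comm 1 x] at h1
    simp only [Nat.add_sub_cancel, Nat.cast_add, Nat.cast_one] at h1
    simp only [Polynomial.eval_mul, Polynomial.eval_C, Polynomial.eval_sub, Polynomial.eval_comp,
      Polynomial.eval_add, Polynomial.eval_X, Polynomial.eval_one]
    have hx : x - 1 + 1 = x := by ring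
    rw [hx, h1]
    have : (n:ℚ) + 1 ≠ 0 := by positivity
    field_simp
    ring
  · simp

open MvPolynomial in
lemma exists_antidiff {m : ℕ} (P : MvPolynomial (Fin (m+1)) ℚ) :
    ∃ F : MvPolynomial (Fin (m+1)) ℚ,
      (∀ x : Fin (m+1) → ℚ, eval x F - eval (Fin.cons (x 0 - 1) (fun i => x i.succ)) F = eval x P)
      ∧ (∀ x : Fin (m+1) → ℚ, x 0 = -1 → eval x F = 0) := by
  induction P using MvPolynomial.induction_on' with
  | add p q hp hq =>
    obtain ⟨F, hF1, hF2⟩ := hp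
    obtain ⟨G, hG1, hG2⟩ := hq
    exact ⟨F + G, fun x => by simp [map_add]; rw [← hF1 x, ← hG1 x]; ring,
      fun x hx => by simp [map_add, hF2 x hx, hG2 x hx]⟩
  | monomial u a =>
    obtain ⟨A, hA1, hA2⟩ := exists_antideriv_pow (u 0)
    refine ⟨Polynomial.eval₂ MvPolynomial.C (X 0) A * (C a * ∏ i : Fin m, X i.succ ^ u i.succ),
      ?_, ?_⟩
    · intro x
      have key : ∀ y : Fin (m+1) → ℚ,
          eval y (Polynomial.eval₂ MvPolynomial.C (X 0) A * (C a * ∏ i : Fin m, X i.succ ^ u i.succ))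
          = A.eval (y 0) * (a * ∏ i : Fin m, y i.succ ^ u i.succ) := by
        intro y
        rw [map_mul]
        congr 1
        · rw [Polynomial.hom_eval₂]
          have : (eval y).comp (MvPolynomial.C : ℚ →+* MvPolynomial (Fin (m+1)) ℚ) = RingHom.id ℚ := by
            ext r; simp
          rw [this, MvPolynomial.eval_X]
          rfl
        · simp
      rw [key x, key _]
      have hx0 : (Fin.cons (x 0 - 1) (fun i => x i.succ) : Fin (m+1) → ℚ) 0 = x 0 - 1 := rfl
      have hxs : ∀ i : Fin m, (Fin.cons (x 0 - 1) (fun i => x i.succ) : Fin (m+1) → ℚ) i.succ = x i.succ := by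
        intro i; simp
      rw [hx0]
      simp only [hxs]
      rw [eval_monomial]
      rw [Finsupp.prod_fintype _ _ (by intro i; simp)]
      rw [Fin.prod_univ_succ]
      rw [← sub_mul, hA1 (x 0)]
      ring
    · intro x hx
      have : eval x (Polynomial.eval₂ MvPolynomial.C (X 0) A) = A.eval (x 0) := by
        rw [Polynomial.hom_eval₂]
        have : (eval x).comp (MvPolynomial.C : ℚ →+* MvPolynomial (Fin (m+1)) ℚ) = RingHom.id ℚ := by
          ext r; simp
        rw [this, MvPolynomial.eval_X]; rfl
      rw [map_mul, this, hx, hA2, zero_mul]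

open MvPolynomial in
lemma eval_bind₁' {σ τ : Type*} (x : τ → ℚ) (g : σ → MvPolynomial τ ℚ) (φ : MvPolynomial σ ℚ) :
    eval x (bind₁ g φ) = eval (fun i => eval x (g i)) φ := by
  have h := aeval_bind₁ (R := ℚ) x g φ
  exact h

/-- A function `Q : ℤ^d → ℚ` is a quasipolynomial if there are a positive integer `p`
and polynomials `q_r ∈ ℚ[x₁,…,x_d]`, indexed by residue vectors `r ∈ (ℤ/p)^d`, with
`Q t = q_{t mod p}(t)` for all `t ∈ ℤ^d`. -/
def IsQuasiPolynomial {d : ℕ} (Q : (Fin d → ℤ) → ℚ) : Prop :=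
  ∃ p : ℕ, 0 < p ∧ ∃ q : (Fin d → ZMod p) → MvPolynomial (Fin d) ℚ,
    ∀ t : Fin d → ℤ, Q t = MvPolynomial.eval (fun i => (t i : ℚ)) (q fun i => (t i : ZMod p))

/-- The signed convention for a finite sum `∑_{k=a}^{b} f(k)` over integers: the ordinary
sum if `a ≤ b`, the value `0` if `a = b + 1`, and `-∑_{k=b+1}^{a-1} f(k)` if `a ≥ b + 2`. -/
noncomputable def signedSum (a b : ℤ) (f : ℤ → ℚ) : ℚ :=
  if a ≤ b then ∑ k ∈ Finset.Icc a b, f k else -∑ k ∈ Finset.Icc (b + 1) (a - 1), f k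

def QPper {n : ℕ} (D : ℤ) (Q : (Fin n → ℤ) → ℚ) : Prop :=
  ∀ τ : Fin n → ℤ, ∃ g : MvPolynomial (Fin n) ℚ,
    ∀ u : Fin n → ℤ, Q (fun i => τ i + D * u i) = MvPolynomial.eval (fun i => (u i : ℚ)) g

open MvPolynomial in
lemma isQuasiPolynomial_of_QPper {n : ℕ} {D : ℤ} (hD : 0 < D) {Q : (Fin n → ℤ) → ℚ}
    (h : QPper D Q) : IsQuasiPolynomial Q := by
  set p : ℕ := D.toNat with hp
  have hp0 : 0 < p := by omega
  have hpD : (p : ℤ) = D := by omega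
  haveI : NeZero p := ⟨by omega⟩
  choose g hg using h
  refine ⟨p, hp0, fun r => bind₁ (fun i => (X i - C (((r i).val : ℚ))) * C ((D:ℚ)⁻¹))
      (g (fun i => ((r i).val : ℤ))), fun t => ?_⟩
  set r : Fin n → ZMod p := fun i => (t i : ZMod p) with hr
  set τ : Fin n → ℤ := fun i => ((r i).val : ℤ) with hτ
  have hdvd : ∀ i, D ∣ t i - τ i := by
    intro i
    rw [← hpD, ← ZMod.intCast_zmod_eq_zero_iff_dvd]
    simp only [hτ]
    push_cast
    rw [ZMod.natCast_val, ZMod.cast_id]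
    simp [hr]
  set u : Fin n → ℤ := fun i => (t i - τ i) / D with hu
  have hDu : ∀ i, D * u i = t i - τ i := fun i => Int.mul_ediv_cancel' (hdvd i)
  have ht : t = fun i => τ i + D * u i := by
    funext i; rw [hDu i]; ring
  rw [ht, hg (fun i => τ i)]
  rw [eval_bind₁']
  have hpt : (fun i => eval (fun j => (((fun i => τ i + D * u i) j : ℤ) : ℚ))
      ((X i - C (((r i).val : ℚ))) * C ((D:ℚ)⁻¹))) = fun i => ((u i : ℤ) : ℚ) := by
    funext i
    have hD' : (D:ℚ) ≠ 0 := by positivity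
    simp only [eval_mul, eval_sub, eval_X, eval_C]
    have hτv : (((r i).val : ℚ)) = ((τ i : ℤ) : ℚ) := by rw [hτ]; push_cast; ring
    rw [hτv]
    field_simp
    push_cast; ring
  rw [hpt]

open MvPolynomial in
lemma QPper_of_isQuasiPolynomial {n : ℕ} {Q : (Fin n → ℤ) → ℚ}
    (h : IsQuasiPolynomial Q) : ∃ p : ℕ, 0 < p ∧ QPper (p : ℤ) Q := by
  obtain ⟨p, hp0, qr, hqr⟩ := h
  refine ⟨p, hp0, fun τ => ⟨bind₁ (fun i => C ((τ i : ℚ)) + C ((p:ℚ)) * X i)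
    (qr (fun i => (τ i : ZMod p))), fun u => ?_⟩⟩
  rw [hqr]
  rw [eval_bind₁']
  have hres : (fun i => ((τ i + (p:ℤ) * u i : ℤ) : ZMod p)) = fun i => (τ i : ZMod p) := by
    funext i; push_cast; simp
  rw [hres]
  have hpt : (fun i => eval (fun j => ((u j : ℤ) : ℚ)) (C ((τ i : ℚ)) + C ((p:ℚ)) * X i))
      = fun i => (((τ i + (p:ℤ) * u i : ℤ)) : ℚ) := by
    funext i
    simp only [eval_add, eval_mul, eval_C, eval_X]
    push_cast; ring
  rw [hpt]

lemma signedSum_neg_one (f : ℤ → ℚ) : signedSum 0 (-1) f = 0 := by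
  simp [signedSum]

lemma signedSum_rec (N : ℤ) (f : ℤ → ℚ) :
    signedSum 0 N f - signedSum 0 (N - 1) f = f N := by
  rcases le_or_gt 1 N with h | h
  · have h1 : (0:ℤ) ≤ N := by omega
    have h2 : (0:ℤ) ≤ N - 1 := by omega
    rw [signedSum, signedSum, if_pos h1, if_pos h2]
    have : Finset.Icc (0:ℤ) N = insert N (Finset.Icc 0 (N-1)) := by
      ext k; simp [Finset.mem_Icc]; omega
    rw [this, Finset.sum_insert (by simp)]
    ring
  rcases eq_or_lt_of_le (by omega : N ≤ 0) with h0 | h0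
  · subst h0
    rw [signedSum, signedSum, if_pos le_rfl, if_neg (by omega)]
    norm_num
  · have h1 : ¬ (0:ℤ) ≤ N := by omega
    have h2 : ¬ (0:ℤ) ≤ N - 1 := by omega
    rw [signedSum, signedSum, if_neg h1, if_neg h2]
    norm_num only
    have : Finset.Icc (N - 1 + 1) (-1:ℤ) = insert N (Finset.Icc (N + 1) (-1)) := by
      ext k; simp [Finset.mem_Icc]; omega
    rw [this, Finset.sum_insert (by simp)]
    ring

lemma eq_of_diff_eq (g h : ℤ → ℚ) (h0 : g (-1) = h (-1))
    (hd : ∀ n : ℤ, g n - g (n - 1) = h n - h (n - 1)) : ∀ n, g n = h n := by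
  have key : ∀ n : ℕ, g (-1 + n) = h (-1 + n) ∧ g (-1 - n) = h (-1 - n) := by
    intro n
    induction n with
    | zero => exact ⟨by simpa using h0, by simpa using h0⟩
    | succ k ih =>
      constructor
      · have := hd (-1 + (k+1))
        have e : (-1 + ((k:ℤ)+1)) - 1 = -1 + k := by push_cast; ring
        rw [e] at this
        have := this
        push_cast at this ih ⊢
        linarith [ih.1]
      · have := hd (-1 - k)
        have e : (-1 - (k:ℤ)) - 1 = -1 - (k+1) := by push_cast; ring
        rw [e] at this
        push_cast at this ih ⊢
        linarith [ih.2]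
  intro n
  rcases le_or_gt (-1) n with hn | hn
  · obtain ⟨k, hk⟩ := exists_add_of_le hn
    have := (key k.toNat).1
    rw [Int.toNat_of_nonneg (by omega)] at this
    rwa [hk]
  · have hn' : n ≤ -1 := by omega
    obtain ⟨k, hk⟩ := exists_add_of_le hn'
    have := (key k.toNat).2
    rw [Int.toNat_of_nonneg (by omega)] at this
    have e : n = -1 - k := by omega
    rwa [← e] at this

/-- **Lemma on quasipolynomials, second sum.**  If `q : ℤ^m → ℚ` is a quasipolynomial and
`a₁,…,a_m, c₀,…,c_m, d` are integers with `d ≠ 0`, then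
`Q₂(t₀,…,t_m) = ∑_{k=0}^{⌊(c₀t₀+⋯+c_mt_m)/d⌋} q(t₁+a₁k, …, t_m+a_mk)`
(signed-sum convention) is a quasipolynomial on `ℤ^{m+1}`. -/
theorem quasipolynomial_signed_sum_two
    (m : ℕ) (q : (Fin m → ℤ) → ℚ) (hq : IsQuasiPolynomial q)
    (a : Fin m → ℤ) (c : Fin (m + 1) → ℤ) (d : ℤ) (hd : d ≠ 0) :
    IsQuasiPolynomial (fun t : Fin (m + 1) → ℤ =>
      signedSum 0 ⌊((∑ i, c i * t i : ℤ) : ℚ) / (d : ℚ)⌋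
        (fun k => q fun i => t i.succ + a i * k)) := by
  classical
  obtain ⟨p, hp0, hQP⟩ := QPper_of_isQuasiPolynomial hq
  choose g hg using hQP
  have hpZ : (0:ℤ) < (p:ℤ) := by exact_mod_cast hp0
  have hpne : (p:ℤ) ≠ 0 := by omega
  apply isQuasiPolynomial_of_QPper (D := (p:ℤ) * d^2)
    (by positivity)
  intro θ
  set θ' : Fin m → ℤ := fun i => θ i.succ with hθ'
  -- the class polynomials and their antidifferences
  set ψ : ℕ → MvPolynomial (Fin (m+1)) ℚ := fun r =>
    MvPolynomial.bind₁ (fun i : Fin m => MvPolynomial.X i.succ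
      + MvPolynomial.C ((a i : ℚ)) * MvPolynomial.X 0) (g (fun i => θ' i + a i * r)) with hψ
  choose F hF1 hF2 using fun r : ℕ => exists_antidiff (ψ r)
  -- evaluation of ψ
  have hψeval : ∀ (r : ℕ) (j : ℤ) (w : Fin m → ℤ),
      MvPolynomial.eval (Fin.cons ((j:ℚ)) (fun i => (w i : ℚ))) (ψ r)
        = q (fun i => (θ' i + (p:ℤ) * w i) + a i * ((r:ℤ) + p * j)) := by
    intro r j w
    rw [hψ]
    rw [eval_bind₁']
    have hpt : (fun i => MvPolynomial.eval (Fin.cons ((j:ℚ)) (fun i => (w i : ℚ)))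
        (MvPolynomial.X (i.succ) + MvPolynomial.C ((a i : ℚ)) * MvPolynomial.X 0))
        = fun i => (((w i + a i * j : ℤ)) : ℚ) := by
      funext i
      simp only [map_add, map_mul, MvPolynomial.eval_X, MvPolynomial.eval_C]
      rw [Fin.cons_succ, Fin.cons_zero]
      push_cast; ring
    rw [hpt, ← hg (fun i => θ' i + a i * r) (fun i => w i + a i * j)]
    congr 1
    funext i
    ring
  -- the floor-division data
  set M : ℕ → ℤ → ℤ := fun r N => (N - r - (N - (r:ℤ)) % p) / p with hMdef
  have hM : ∀ (r : ℕ) (N : ℤ), (p:ℤ) * M r N = N - r - (N - (r:ℤ)) % p := by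
    intro r N
    apply Int.mul_ediv_cancel'
    exact Int.dvd_self_sub_of_emod_eq rfl
  have hmod_nonneg : ∀ (x : ℤ), 0 ≤ x % p := fun x => Int.emod_nonneg x hpne
  have hmod_lt : ∀ (x : ℤ), x % p < p := fun x => Int.emod_lt_of_pos x hpZ
  -- T function
  set T : ℤ → (Fin m → ℤ) → ℚ := fun N w => ∑ r ∈ Finset.range p,
    MvPolynomial.eval (Fin.cons ((M r N : ℤ):ℚ) (fun i => (w i : ℚ))) (F r) with hT
  -- T at -1 vanishes
  have hT1 : ∀ w, T (-1) w = 0 := by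
    intro w
    rw [hT]
    apply Finset.sum_eq_zero
    intro r hr
    have hrp : (r : ℤ) < p := by exact_mod_cast Finset.mem_range.mp hr
    have hmod : (-1 - (r:ℤ)) % p = (p:ℤ) - 1 - r := by
      have h1 : (-1 - (r:ℤ)) = ((p:ℤ) - 1 - r) + p * (-1) := by ring
      rw [h1, Int.add_mul_emod_self_left]
      exact Int.emod_eq_of_lt (by omega) (by omega)
    have hMr : M r (-1) = -1 := by
      have := hM r (-1)
      rw [hmod] at this
      have h2 : (p:ℤ) * M r (-1) = (p:ℤ) * (-1) := by omega
      exact mul_left_cancel₀ hpne h2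
    apply hF2
    rw [hMr, Fin.cons_zero]
    norm_num
  -- difference property of T
  have hTdiff : ∀ (N : ℤ) (w : Fin m → ℤ),
      T N w - T (N-1) w = q (fun i => (θ' i + (p:ℤ) * w i) + a i * N) := by
    intro N w
    rw [hT]
    rw [← Finset.sum_sub_distrib]
    have hterm : ∀ r ∈ Finset.range p,
        (MvPolynomial.eval (Fin.cons ((M r N : ℤ):ℚ) (fun i => (w i : ℚ))) (F r)
          - MvPolynomial.eval (Fin.cons ((M r (N-1) : ℤ):ℚ) (fun i => (w i : ℚ))) (F r))
        = if r = (N % p).toNat then q (fun i => (θ' i + (p:ℤ) * w i) + a i * N) else 0 := by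
      intro r hr
      have hrp : (r : ℤ) < p := by exact_mod_cast Finset.mem_range.mp hr
      by_cases hcase : (N - (r:ℤ)) % p = 0
      · -- the jumping class
        have hreq : r = (N % p).toNat := by
          have hdvd : (p:ℤ) ∣ N - r := Int.dvd_of_emod_eq_zero hcase
          have : N % p = (r:ℤ) % p := Int.ModEq.symm (Int.modEq_iff_dvd.mpr (by
            simpa using hdvd))
          rw [this, Int.emod_eq_of_lt (by omega) (by omega)]
          omega
        rw [if_pos hreq]
        have hNr : N - (r:ℤ) = (p:ℤ) * M r N := by
          have := hM r N; omega
        have hmod1 : (N - 1 - (r:ℤ)) % p = (p:ℤ) - 1 := by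
          have h1 : N - 1 - (r:ℤ) = ((p:ℤ) - 1) + p * (M r N - 1) := by
            have hring : (p:ℤ) * (M r N - 1) = p * M r N - p := by ring
            omega
          rw [h1, Int.add_mul_emod_self_left]
          exact Int.emod_eq_of_lt (by omega) (by omega)
        have hM1 : M r (N - 1) = M r N - 1 := by
          have h2 := hM r (N-1)
          rw [hmod1] at h2
          have h3 : (p:ℤ) * M r (N-1) = (p:ℤ) * (M r N - 1) := by
            have hring : (p:ℤ) * (M r N - 1) = p * M r N - p := by ring
            have hMN := hM r N
            omega
          exact mul_left_cancel₀ hpne h3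
        rw [hM1]
        have hx := hF1 r (Fin.cons ((M r N : ℤ):ℚ) (fun i => (w i : ℚ)))
        have hpteq : (Fin.cons ((Fin.cons ((M r N : ℤ):ℚ) (fun i => (w i : ℚ)) : Fin (m+1) → ℚ) 0 - 1)
            (fun i => (Fin.cons ((M r N : ℤ):ℚ) (fun i => (w i : ℚ)) : Fin (m+1) → ℚ) i.succ) : Fin (m+1) → ℚ)
            = Fin.cons (((M r N - 1 : ℤ)):ℚ) (fun i => (w i : ℚ)) := by
          funext j
          refine Fin.cases ?_ ?_ j
          · rw [Fin.cons_zero, Fin.cons_zero, Fin.cons_zero]; push_cast; ring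
          · intro i; rw [Fin.cons_succ, Fin.cons_succ, Fin.cons_succ]
        rw [hpteq] at hx
        rw [hx, hψeval r (M r N) w]
        have hrN : (r:ℤ) + (p:ℤ) * M r N = N := by omega
        simp only [hrN]
      · -- no jump
        rw [if_neg (by
          intro hreq
          apply hcase
          subst hreq
          have hcast : (((N % (p:ℤ)).toNat : ℕ) : ℤ) = N % p := by
            have := hmod_nonneg N; omega
          rw [hcast]
          exact Int.emod_eq_zero_of_dvd (Int.dvd_self_sub_of_emod_eq rfl))]
        have he1 : 1 ≤ (N - (r:ℤ)) % p := by
          have := hmod_nonneg (N - (r:ℤ)); omega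
        have hmod1 : (N - 1 - (r:ℤ)) % p = (N - (r:ℤ)) % p - 1 := by
          have h1 : N - 1 - (r:ℤ) = ((N - (r:ℤ)) % p - 1) + p * (M r N) := by
            have := hM r N; omega
          rw [h1, Int.add_mul_emod_self_left]
          exact Int.emod_eq_of_lt (by omega) (by have := hmod_lt (N - (r:ℤ)); omega)
        have hM1 : M r (N - 1) = M r N := by
          have h2 := hM r (N-1)
          rw [hmod1] at h2
          have h3 : (p:ℤ) * M r (N-1) = (p:ℤ) * M r N := by
            have := hM r N; omega
          exact mul_left_cancel₀ hpne h3
        rw [hM1, sub_self]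
    rw [Finset.sum_congr rfl hterm]
    rw [Finset.sum_ite_eq' (Finset.range p) ((N % p).toNat)
      (fun _ => q (fun i => (θ' i + (p:ℤ) * w i) + a i * N))]
    rw [if_pos]
    rw [Finset.mem_range]
    have h1 := hmod_nonneg N
    have h2 := hmod_lt N
    omega
  -- S = T
  have hST : ∀ (w : Fin m → ℤ) (N : ℤ),
      signedSum 0 N (fun k => q (fun i => (θ' i + (p:ℤ) * w i) + a i * k)) = T N w := by
    intro w
    apply eq_of_diff_eq
    · rw [signedSum_neg_one, hT1]
    · intro n
      rw [signedSum_rec, hTdiff]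
  -- T along the coset is a polynomial
  have hMshift : ∀ (r : ℕ) (ν n : ℤ), M r (ν + p * n) = M r ν + n := by
    intro r ν n
    have hmodeq : (ν + (p:ℤ) * n - r) % p = (ν - (r:ℤ)) % p := by
      have h1 : ν + (p:ℤ) * n - r = (ν - (r:ℤ)) + p * n := by ring
      rw [h1, Int.add_mul_emod_self_left]
    have h2 := hM r (ν + p * n)
    rw [hmodeq] at h2
    have h3 : (p:ℤ) * M r (ν + p*n) = (p:ℤ) * (M r ν + n) := by
      have hring : (p:ℤ) * (M r ν + n) = p * M r ν + p * n := by ring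
      have := hM r ν
      omega
    exact mul_left_cancel₀ hpne h3
  -- the final polynomial
  set ν₀ : ℤ := ⌊((∑ i, c i * θ i : ℤ) : ℚ) / (d : ℚ)⌋ with hν₀
  set G : MvPolynomial (Fin (m+1)) ℚ := ∑ r ∈ Finset.range p,
    MvPolynomial.bind₁ (Fin.cons (MvPolynomial.X 0 + MvPolynomial.C ((M r ν₀ : ℤ):ℚ))
      (fun i => MvPolynomial.X i.succ)) (F r) with hG
  have hGeval : ∀ (n : ℤ) (w : Fin m → ℤ),
      T (ν₀ + p * n) w = MvPolynomial.eval (Fin.cons ((n:ℚ)) (fun i => (w i : ℚ))) G := by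
    intro n w
    rw [hT, hG, map_sum]
    apply Finset.sum_congr rfl
    intro r _
    rw [eval_bind₁']
    have hpt : (fun j => MvPolynomial.eval (Fin.cons ((n:ℚ)) (fun i => (w i : ℚ)))
        ((Fin.cons (MvPolynomial.X 0 + MvPolynomial.C ((M r ν₀ : ℤ):ℚ))
          (fun i => MvPolynomial.X i.succ) : Fin (m+1) → MvPolynomial (Fin (m+1)) ℚ) j))
        = (Fin.cons ((M r (ν₀ + p * n) : ℤ):ℚ) (fun i => (w i : ℚ)) : Fin (m+1) → ℚ) := by
      funext j
      refine Fin.cases ?_ ?_ j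
      · rw [Fin.cons_zero, Fin.cons_zero]
        simp only [map_add, MvPolynomial.eval_X, MvPolynomial.eval_C, Fin.cons_zero]
        rw [hMshift r ν₀ n]
        push_cast; ring
      · intro i
        rw [Fin.cons_succ, Fin.cons_succ]
        simp only [MvPolynomial.eval_X, Fin.cons_succ]
    rw [hpt]
  refine ⟨MvPolynomial.bind₁ (Fin.cons (∑ i : Fin (m+1), MvPolynomial.C ((d * c i : ℤ):ℚ) * MvPolynomial.X i)
      (fun i => MvPolynomial.C (((d*d : ℤ)):ℚ) * MvPolynomial.X i.succ)) G, ?_⟩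
  intro u
  set D : ℤ := (p:ℤ) * d^2 with hD
  set t : Fin (m+1) → ℤ := fun i => θ i + D * u i with htdef
  set W : ℤ := ∑ i, c i * u i with hW
  set w : Fin m → ℤ := fun i => d * d * u i.succ with hw
  -- compute the floor
  have hL : (∑ i, c i * t i) = (∑ i, c i * θ i) + D * W := by
    rw [htdef, hW]
    simp only []
    rw [Finset.mul_sum, ← Finset.sum_add_distrib]
    apply Finset.sum_congr rfl
    intro i _
    ring
  have hfloor : ⌊((∑ i, c i * t i : ℤ) : ℚ) / (d : ℚ)⌋ = ν₀ + p * (d * W) := by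
    rw [hL]
    have hd' : (d:ℚ) ≠ 0 := by exact_mod_cast hd
    have : (((∑ i, c i * θ i) + D * W : ℤ) : ℚ) / (d:ℚ)
        = ((∑ i, c i * θ i : ℤ) : ℚ) / (d:ℚ) + ((p * (d * W) : ℤ) : ℚ) := by
      rw [hD]
      push_cast
      field_simp
    rw [this, Int.floor_add_intCast, hν₀]
  -- the tail
  have htail : ∀ i : Fin m, t i.succ = θ' i + (p:ℤ) * w i := by
    intro i
    rw [htdef, hw, hθ', hD]
    ring
  -- put it together
  show signedSum 0 ⌊((∑ i, c i * t i : ℤ) : ℚ) / (d : ℚ)⌋ (fun k => q fun i => t i.succ + a i * k)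
      = _
  rw [hfloor]
  have hsummand : (fun k => q fun i => t i.succ + a i * k)
      = fun k => q (fun i => (θ' i + (p:ℤ) * w i) + a i * k) := by
    funext k
    congr 1
    funext i
    rw [htail i]
  rw [hsummand, hST w, hGeval]
  rw [eval_bind₁']
  have hpt : (fun j => MvPolynomial.eval (fun i => ((u i : ℤ):ℚ))
      ((Fin.cons (∑ i : Fin (m+1), MvPolynomial.C ((d * c i : ℤ):ℚ) * MvPolynomial.X i)
        (fun i => MvPolynomial.C (((d*d : ℤ)):ℚ) * MvPolynomial.X i.succ)
        : Fin (m+1) → MvPolynomial (Fin (m+1)) ℚ) j))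
      = (Fin.cons (((d * W : ℤ)):ℚ) (fun i => (w i : ℚ)) : Fin (m+1) → ℚ) := by
    funext j
    refine Fin.cases ?_ ?_ j
    · rw [Fin.cons_zero, Fin.cons_zero]
      rw [map_sum]
      rw [hW, Finset.mul_sum]
      push_cast
      apply Finset.sum_congr rfl
      intro i _
      simp only [map_mul, MvPolynomial.eval_C, MvPolynomial.eval_X]
      push_cast
      ring
    · intro i
      rw [Fin.cons_succ, Fin.cons_succ]
      simp only [map_mul, MvPolynomial.eval_C, MvPolynomial.eval_X]
      rw [hw]
      push_cast
      ring
  rw [hpt]
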